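/- h(t) → 2/α as t → ∞, so the spherical warping factor of the Sha–Yang metric converges to the constant 2/α. -/

import Mathlib

open Filter Set Real

/-- `h(t) → 2/α` as `t → ∞`. -/
theorem shaYang_h_tendsto (α : ℝ) (hα : 0 < α) (f : ℝ → ℝ)
    (hf : ContDiff ℝ 2 f) (hf0 : f 0 = 1) (hf'0 : deriv f 0 = 0)
    (hfpos : ∀ t ≥ (0 : ℝ), 0 < f t)
    (hode : ∀ t ≥ (0 : ℝ), deriv (deriv f) t = (α / 2) * (f t) ^ (-α - 1))
    (h : ℝ → ℝ) (hh : h = fun t => (2 / α) * deriv f t) :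
    Filter.Tendsto h Filter.atTop (nhds (2 / α)) := by
  have hdfd : Differentiable ℝ f := hf.differentiable two_ne_zero
  have hdf2 : ContDiff ℝ 1 (deriv f) := by
    have := (contDiff_succ_iff_deriv (n := 1)).mp (by exact_mod_cast hf)
    exact this.2.2
  have hdf' : Differentiable ℝ (deriv f) := hdf2.differentiable one_ne_zero
  -- energy identity
  have energy : ∀ t ≥ (0 : ℝ), (deriv f t) ^ 2 + (f t) ^ (-α) = 1 := by
    intro t ht
    set g : ℝ → ℝ := fun s => (deriv f s) ^ 2 + (f s) ^ (-α) with hg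
    have hcont : ContinuousOn g (Icc 0 t) := by
      apply ContinuousOn.add
      · exact (hdf'.continuous.pow 2).continuousOn
      · exact (hdfd.continuous.continuousOn).rpow_const
          (fun x hx => Or.inl (hfpos x hx.1).ne')
    have hderiv : ∀ x ∈ Ico (0 : ℝ) t, HasDerivWithinAt g 0 (Ici x) x := by
      intro x hx
      have h1 : HasDerivAt (fun s => (deriv f s) ^ 2)
          (↑(2 : ℕ) * (deriv f x) ^ (2 - 1) * deriv (deriv f) x) x :=
        (hdf' x).hasDerivAt.pow 2
      have h2 : HasDerivAt (fun s => (f s) ^ (-α))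
          (deriv f x * (-α) * (f x) ^ (-α - 1)) x :=
        (hdfd x).hasDerivAt.rpow_const (Or.inl (hfpos x hx.1).ne')
      have h3 : HasDerivAt g
          (↑(2 : ℕ) * (deriv f x) ^ (2 - 1) * deriv (deriv f) x
            + deriv f x * (-α) * (f x) ^ (-α - 1)) x := h1.add h2
      have hzero : (↑(2 : ℕ) * (deriv f x) ^ (2 - 1) * deriv (deriv f) x
            + deriv f x * (-α) * (f x) ^ (-α - 1)) = 0 := by
        rw [hode x hx.1]; push_cast; ring
      rw [hzero] at h3
      exact h3.hasDerivWithinAt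
    have key := constant_of_has_deriv_right_zero hcont hderiv t (right_mem_Icc.2 ht)
    have hg0 : g 0 = 1 := by simp [hg, hf'0, hf0]
    rw [hg0] at key
    exact key
  -- deriv f strictly monotone on [0,∞)
  have hmono : StrictMonoOn (deriv f) (Ici 0) := by
    apply strictMonoOn_of_deriv_pos (convex_Ici 0) hdf'.continuous.continuousOn
    intro x hx
    rw [interior_Ici] at hx
    rw [hode x hx.le]
    have := Real.rpow_pos_of_pos (hfpos x hx.le) (-α - 1)
    positivity
  have hdnonneg : ∀ t ≥ (0 : ℝ), 0 ≤ deriv f t := by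
    intro t ht
    rcases eq_or_lt_of_le ht with h0 | h0
    · rw [← h0, hf'0]
    · rw [← hf'0]; exact (hmono (le_refl (0 : ℝ)) ht h0).le
  -- f tends to infinity
  have hc : 0 < deriv f 1 := by
    rw [← hf'0]; exact hmono self_mem_Ici (mem_Ici.2 zero_le_one) one_pos
  have hflb : ∀ t ≥ (1 : ℝ), f 1 + deriv f 1 * (t - 1) ≤ f t := by
    intro t ht
    have := (convex_Ici 1).mul_sub_le_image_sub_of_le_deriv
      hdfd.continuous.continuousOn hdfd.differentiableOn
      (C := deriv f 1)
      (fun x hx => by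
        rw [interior_Ici] at hx
        exact hmono.monotoneOn (mem_Ici.2 zero_le_one)
          (mem_Ici.2 (by linarith [mem_Ioi.1 hx])) (le_of_lt (mem_Ioi.1 hx)))
      1 self_mem_Ici t ht ht
    linarith
  have hftop : Tendsto f atTop atTop := by
    apply tendsto_atTop_mono' _ ((eventually_ge_atTop (1 : ℝ)).mono fun t ht => hflb t ht)
    exact tendsto_atTop_add_const_left _ _
      ((tendsto_atTop_add_const_right _ _ tendsto_id).const_mul_atTop hc)
  -- f^(-α) → 0
  have hpow0 : Tendsto (fun t => (f t) ^ (-α)) atTop (nhds 0) :=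
    (tendsto_rpow_neg_atTop hα).comp hftop
  -- deriv f = sqrt (1 - f^(-α)) on [0,∞)
  have hsqrt : ∀ t ≥ (0 : ℝ), deriv f t = Real.sqrt (1 - (f t) ^ (-α)) := by
    intro t ht
    have e := energy t ht
    have h0 : 1 - (f t) ^ (-α) = (deriv f t) ^ 2 := by linarith
    rw [h0, Real.sqrt_sq (hdnonneg t ht)]
  have hsub : Tendsto (fun t => 1 - (f t) ^ (-α)) atTop (nhds 1) := by
    have := (tendsto_const_nhds : Tendsto (fun _ : ℝ => (1 : ℝ)) atTop (nhds 1)).sub hpow0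
    simpa using this
  have hsq : Tendsto (fun t => Real.sqrt (1 - (f t) ^ (-α))) atTop (nhds 1) := by
    have := (Real.continuous_sqrt.tendsto 1).comp hsub
    simpa [Real.sqrt_one, Function.comp_def] using this
  have hdtend : Tendsto (deriv f) atTop (nhds 1) :=
    hsq.congr' ((eventually_ge_atTop (0 : ℝ)).mono fun t ht => (hsqrt t ht).symm)
  rw [hh]
  have := hdtend.const_mul (2 / α)
  simpa using this
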